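/- Let X be a real-valued random variable with a density g ∈ L^1(ℝ) admitting the representation g(x) = E[1_{X>x} H] for an integrable random variable H. Then ‖g‖_{L^1} ≤ E[|X|·|H|]. -/

import Mathlib

open MeasureTheory Set ENNReal NNReal

/-- If a real random variable `X` has density `g` with the Malliavin-type
representation `g(x) = E[1_{X>x} H]` where `E[H] = 0`, then
`‖g‖_{L¹} ≤ E[|X||H|]`. -/
theorem density_L1_bound_from_representation
    (Ω : Type) [MeasureSpace Ω] [IsProbabilityMeasure (volume : Measure Ω)]
    (X H : Ω → ℝ) (hX : Measurable X) (hH : Measurable H)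
    (hHint : Integrable H)
    (hXH : Integrable (fun ω => |X ω| * |H ω|))
    (g : ℝ → ℝ) (hg : Integrable g)
    (hdensity : Measure.map X volume
      = (volume : Measure ℝ).withDensity (fun x => ENNReal.ofReal (g x)))
    (hrep : ∀ x : ℝ, g x = ∫ ω, if x < X ω then H ω else 0)
    (hH0 : (∫ ω, H ω) = 0) :
    (∫ x, |g x|) ≤ ∫ ω, |X ω| * |H ω| := by
  have hXHnn : (0:ℝ) ≤ ∫ ω, |X ω| * |H ω| := integral_nonneg fun ω => by positivity
  -- the kernel in the product space
  set f : ℝ → Ω → ℝ≥0∞ := fun x ω =>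
    Set.indicator (Set.Ico 0 (X ω) ∪ Set.Ico (X ω) 0) (fun _ => (‖H ω‖₊ : ℝ≥0∞)) x with hf
  have hSmeas : MeasurableSet {p : ℝ × Ω | p.1 ∈ Set.Ico 0 (X p.2) ∪ Set.Ico (X p.2) 0} := by
    have h1 : MeasurableSet {p : ℝ × Ω | 0 ≤ p.1 ∧ p.1 < X p.2} :=
      (measurableSet_le measurable_const measurable_fst).inter
        (measurableSet_lt measurable_fst (hX.comp measurable_snd))
    have h2 : MeasurableSet {p : ℝ × Ω | X p.2 ≤ p.1 ∧ p.1 < 0} :=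
      (measurableSet_le (hX.comp measurable_snd) measurable_fst).inter
        (measurableSet_lt measurable_fst measurable_const)
    have : {p : ℝ × Ω | p.1 ∈ Set.Ico 0 (X p.2) ∪ Set.Ico (X p.2) 0} =
        {p : ℝ × Ω | 0 ≤ p.1 ∧ p.1 < X p.2} ∪ {p : ℝ × Ω | X p.2 ≤ p.1 ∧ p.1 < 0} := by
      ext p; simp [Set.mem_Ico]
    rw [this]; exact h1.union h2
  have hfmeas : Measurable (Function.uncurry f) := by
    have huncurry : Function.uncurry f =
        Set.indicator {p : ℝ × Ω | p.1 ∈ Set.Ico 0 (X p.2) ∪ Set.Ico (X p.2) 0}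
          (fun p => (‖H p.2‖₊ : ℝ≥0∞)) := by
      ext p
      simp only [Function.uncurry, hf, Set.indicator_apply, Set.mem_setOf_eq]
    rw [huncurry]
    exact Measurable.indicator ((hH.comp measurable_snd).nnnorm.coe_nnreal_ennreal) hSmeas
  -- pointwise bound: ofReal |g x| ≤ ∫⁻ ω, f x ω
  have hpt : ∀ x : ℝ, ENNReal.ofReal |g x| ≤ ∫⁻ ω, f x ω := by
    intro x
    rcases le_or_gt 0 x with hx | hx
    · -- positive side: |g x| ≤ ∫ 1_{x < X} |H|
      have habs : |g x| ≤ ∫ ω, Set.indicator {ω | x < X ω} (fun ω => |H ω|) ω := by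
        rw [hrep x]
        calc |∫ ω, if x < X ω then H ω else 0| ≤ ∫ ω, |if x < X ω then H ω else 0| := by
              simpa [Real.norm_eq_abs] using
                norm_integral_le_integral_norm (fun ω => if x < X ω then H ω else 0)
          _ = ∫ ω, Set.indicator {ω | x < X ω} (fun ω => |H ω|) ω := by
              congr 1 with ω
              simp only [Set.indicator_apply, Set.mem_setOf_eq]
              split <;> simp
      have hint : Integrable (fun ω => Set.indicator {ω | x < X ω} (fun ω => |H ω|) ω) := by
        exact (hHint.abs).indicator (hX measurableSet_Ioi)
      calc ENNReal.ofReal |g x| ≤ ENNReal.ofReal (∫ ω, Set.indicator {ω | x < X ω} (fun ω => |H ω|) ω) :=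
            ENNReal.ofReal_le_ofReal habs
        _ = ∫⁻ ω, ENNReal.ofReal (Set.indicator {ω | x < X ω} (fun ω => |H ω|) ω) :=
            ofReal_integral_eq_lintegral_ofReal hint
              (Filter.Eventually.of_forall fun ω => Set.indicator_nonneg (fun _ _ => abs_nonneg _) _)
        _ = ∫⁻ ω, f x ω := by
            apply lintegral_congr
            intro ω
            simp only [hf, Set.indicator_apply, Set.mem_setOf_eq, Set.mem_union, Set.mem_Ico]
            rcases lt_or_ge x (X ω) with h | h
            · rw [if_pos h, if_pos (Or.inl ⟨hx, h⟩)]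
              rw [← Real.norm_eq_abs, ofReal_norm, enorm_eq_nnnorm]
            · rw [if_neg (not_lt.mpr h), if_neg]
              · simp
              · rintro (⟨_, h2⟩ | ⟨_, h2⟩)
                · exact absurd h2 (not_lt.mpr h)
                · exact absurd h2 (not_lt.mpr hx)
    · -- negative side: g x = -∫ 1_{X ≤ x} H
      have hA : Integrable (fun ω => if x < X ω then H ω else 0) := by
        have : (fun ω => if x < X ω then H ω else 0)
            = Set.indicator {ω | x < X ω} H := by
          ext ω; simp [Set.indicator_apply]
        rw [this]; exact hHint.indicator (hX measurableSet_Ioi)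
      have hB : Integrable (fun ω => if X ω ≤ x then H ω else 0) := by
        have : (fun ω => if X ω ≤ x then H ω else 0)
            = Set.indicator {ω | X ω ≤ x} H := by
          ext ω; simp [Set.indicator_apply]
        rw [this]; exact hHint.indicator (hX measurableSet_Iic)
      have hsum : (∫ ω, if x < X ω then H ω else 0) + (∫ ω, if X ω ≤ x then H ω else 0) = 0 := by
        rw [← integral_add hA hB]
        have heq : (fun ω => (if x < X ω then H ω else 0) + (if X ω ≤ x then H ω else 0)) = H := by
          funext ω
          rcases le_or_gt (X ω) x with h | h
          · rw [if_neg (not_lt.mpr h), if_pos h, zero_add]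
          · rw [if_pos h, if_neg (not_le.mpr h), add_zero]
        rw [heq, hH0]
      have hgx : g x = -(∫ ω, if X ω ≤ x then H ω else 0) := by
        rw [hrep x]; linarith
      have habs : |g x| ≤ ∫ ω, Set.indicator {ω | X ω ≤ x} (fun ω => |H ω|) ω := by
        rw [hgx, abs_neg]
        calc |∫ ω, if X ω ≤ x then H ω else 0| ≤ ∫ ω, |if X ω ≤ x then H ω else 0| := by
              simpa [Real.norm_eq_abs] using
                norm_integral_le_integral_norm (fun ω => if X ω ≤ x then H ω else 0)
          _ = ∫ ω, Set.indicator {ω | X ω ≤ x} (fun ω => |H ω|) ω := by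
              congr 1 with ω
              simp only [Set.indicator_apply, Set.mem_setOf_eq]
              split <;> simp
      have hint : Integrable (fun ω => Set.indicator {ω | X ω ≤ x} (fun ω => |H ω|) ω) :=
        (hHint.abs).indicator (hX measurableSet_Iic)
      calc ENNReal.ofReal |g x| ≤ ENNReal.ofReal (∫ ω, Set.indicator {ω | X ω ≤ x} (fun ω => |H ω|) ω) :=
            ENNReal.ofReal_le_ofReal habs
        _ = ∫⁻ ω, ENNReal.ofReal (Set.indicator {ω | X ω ≤ x} (fun ω => |H ω|) ω) :=
            ofReal_integral_eq_lintegral_ofReal hint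
              (Filter.Eventually.of_forall fun ω => Set.indicator_nonneg (fun _ _ => abs_nonneg _) _)
        _ = ∫⁻ ω, f x ω := by
            apply lintegral_congr
            intro ω
            simp only [hf, Set.indicator_apply, Set.mem_setOf_eq, Set.mem_union, Set.mem_Ico]
            rcases le_or_gt (X ω) x with h | h
            · rw [if_pos h, if_pos (Or.inr ⟨h, hx⟩)]
              rw [← Real.norm_eq_abs, ofReal_norm, enorm_eq_nnnorm]
            · rw [if_neg (not_le.mpr h), if_neg]
              · simp
              · rintro (⟨h1, _⟩ | ⟨h1, _⟩)
                · exact absurd hx (not_lt.mpr h1)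
                · exact absurd h1 (not_le.mpr h)
    -- Tonelli and inner integral computation
  have hinner : ∀ ω : Ω, (∫⁻ x, f x ω) = ENNReal.ofReal (|X ω| * |H ω|) := by
    intro ω
    have hmeasset : MeasurableSet (Set.Ico (0:ℝ) (X ω) ∪ Set.Ico (X ω) 0) :=
      measurableSet_Ico.union measurableSet_Ico
    have : (∫⁻ x, f x ω) = (‖H ω‖₊ : ℝ≥0∞) * volume (Set.Ico (0:ℝ) (X ω) ∪ Set.Ico (X ω) 0) := by
      rw [hf]
      rw [lintegral_indicator hmeasset, setLIntegral_const]
    rw [this]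
    have hvol : volume (Set.Ico (0:ℝ) (X ω) ∪ Set.Ico (X ω) 0) = ENNReal.ofReal |X ω| := by
      rcases le_or_gt 0 (X ω) with h | h
      · rw [Set.Ico_eq_empty (a := X ω) (b := 0) (not_lt.mpr h), Set.union_empty,
          Real.volume_Ico, abs_of_nonneg h, sub_zero]
      · rw [Set.Ico_eq_empty (a := (0:ℝ)) (b := X ω) (not_lt.mpr h.le), Set.empty_union,
          Real.volume_Ico, abs_of_neg h, zero_sub]
    have hc : ((‖H ω‖₊ : ℝ≥0∞)) = ENNReal.ofReal |H ω| := by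
      rw [← enorm_eq_nnnorm, ← ofReal_norm, Real.norm_eq_abs]
    rw [hvol, hc, mul_comm, ← ENNReal.ofReal_mul (abs_nonneg (X ω))]
  -- put it together
  have key : ENNReal.ofReal (∫ x, |g x|) ≤ ENNReal.ofReal (∫ ω, |X ω| * |H ω|) := by
    calc ENNReal.ofReal (∫ x, |g x|) = ∫⁻ x, ENNReal.ofReal |g x| :=
          ofReal_integral_eq_lintegral_ofReal hg.abs
            (Filter.Eventually.of_forall fun x => abs_nonneg _)
      _ ≤ ∫⁻ x, ∫⁻ ω, f x ω := lintegral_mono hpt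
      _ = ∫⁻ ω, ∫⁻ x, f x ω := lintegral_lintegral_swap hfmeas.aemeasurable
      _ = ∫⁻ ω, ENNReal.ofReal (|X ω| * |H ω|) := lintegral_congr hinner
      _ = ENNReal.ofReal (∫ ω, |X ω| * |H ω|) :=
          (ofReal_integral_eq_lintegral_ofReal hXH
            (Filter.Eventually.of_forall fun ω => by positivity)).symm
  exact (ENNReal.ofReal_le_ofReal_iff hXHnn).mp key
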